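/- In the Bernoulli-noise denoising setting, let Π be the m×m diagonal matrix projecting onto the first h coordinates, let Π̂ be any m×m orthogonal projection matrix (Π̂ᵀ = Π̂ and Π̂² = Π̂), and set x̂ = Π̂ y. Then t* := t*(x) and t̂* := t*(x̂) satisfy |t* − t̂*| ≤ 2( ‖Π − Π̂‖₂ ‖y‖₂ + σ√h ) / ‖b‖₂ ≤ 2‖Π − Π̂‖₂ ‖y‖₂ / √m + 2σ√(h/m), where ‖Π − Π̂‖₂ denotes the operator (spectral) norm. -/

import Mathlib

open Matrix

/-- Theorem 3.3 (deterministic estimate): in the Bernoulli-noise setting, with `Π` the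
projection onto the first `h` coordinates, `Π̂` any orthogonal projection matrix and
`x̂ = Π̂ y`, the parameters `t* = t*(x)`, `t̂* = t*(x̂)` satisfy
`|t* - t̂*| ≤ 2(‖Π - Π̂‖₂‖y‖₂ + σ√h)/‖b‖₂ ≤ 2‖Π - Π̂‖₂‖y‖₂/√m + 2σ√(h/m)`. -/
theorem bernoulliNoise_parameter_error_projection (m h : ℕ) (hh : 1 ≤ h) (hhm : h < m)
    (σ : ℝ) (hσ : 0 < σ) (x w y b xhat : Fin m → ℝ)
    (hw : ∀ i, w i = 1 ∨ w i = -1)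
    (hx0 : ∀ i : Fin m, h ≤ (i : ℕ) → x i = 0)
    (hxbig : ∀ i : Fin m, (i : ℕ) < h → 2 * σ ≤ |x i|)
    (hy : ∀ i, y i = x i + σ * w i)
    (hb : ∀ i, b i = 1 + 2 * |y i|)
    (Pmat Phat : Matrix (Fin m) (Fin m) ℝ)
    (hP : Pmat = Matrix.diagonal (fun i : Fin m => if (i : ℕ) < h then (1 : ℝ) else 0))
    (hPhatSymm : Phatᵀ = Phat) (hPhatIdem : Phat * Phat = Phat)
    (hxhat : xhat = Phat.mulVec y)
    (tstar tstarhat : ℝ)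
    (htstar : tstar = ((∑ i, b i) + 2 * ∑ i, Real.sign (y i) * b i * x i) / ∑ i, (b i) ^ 2)
    (htstarhat : tstarhat =
      ((∑ i, b i) + 2 * ∑ i, Real.sign (y i) * b i * xhat i) / ∑ i, (b i) ^ 2) :
    |tstar - tstarhat| ≤
      2 * (‖(Matrix.toEuclideanLin (Pmat - Phat)).toContinuousLinearMap‖ *
            Real.sqrt (∑ i, (y i) ^ 2) + σ * Real.sqrt h) / Real.sqrt (∑ i, (b i) ^ 2) ∧
    2 * (‖(Matrix.toEuclideanLin (Pmat - Phat)).toContinuousLinearMap‖ *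
            Real.sqrt (∑ i, (y i) ^ 2) + σ * Real.sqrt h) / Real.sqrt (∑ i, (b i) ^ 2) ≤
      2 * ‖(Matrix.toEuclideanLin (Pmat - Phat)).toContinuousLinearMap‖ *
          Real.sqrt (∑ i, (y i) ^ 2) / Real.sqrt m +
        2 * σ * Real.sqrt ((h : ℝ) / m) := by
  classical
  set N := ‖(Matrix.toEuclideanLin (Pmat - Phat)).toContinuousLinearMap‖ with hN
  have hNnn : 0 ≤ N := norm_nonneg _
  set D : ℝ := ∑ i, (b i) ^ 2 with hD
  set C : ℝ := N * Real.sqrt (∑ i, (y i) ^ 2) + σ * Real.sqrt h with hC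
  have hCnn : 0 ≤ C := by positivity
  have hb1 : ∀ i, (1 : ℝ) ≤ b i := by
    intro i; rw [hb]; nlinarith [abs_nonneg (y i)]
  have hmD : (m : ℝ) ≤ D := by
    have h1 : ∀ i : Fin m, (1 : ℝ) ≤ (b i) ^ 2 := fun i => by nlinarith [hb1 i]
    calc (m : ℝ) = ∑ _i : Fin m, (1 : ℝ) := by simp
      _ ≤ D := Finset.sum_le_sum fun i _ => h1 i
  have hmpos : (0 : ℝ) < m := by
    have : 0 < m := Nat.lt_of_le_of_lt (Nat.zero_le h) hhm
    exact_mod_cast this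
  have hDpos : (0 : ℝ) < D := lt_of_lt_of_le hmpos hmD
  set d : Fin m → ℝ := fun i => x i - xhat i with hd
  set S : ℝ := ∑ i, Real.sign (y i) * b i * d i with hS
  -- difference of parameters
  have hdiff : tstar - tstarhat = 2 * S / D := by
    have hsplit : S = (∑ i, Real.sign (y i) * b i * x i)
        - ∑ i, Real.sign (y i) * b i * xhat i := by
      rw [hS, ← Finset.sum_sub_distrib]
      exact Finset.sum_congr rfl fun i _ => by simp [hd]; ring
    rw [htstar, htstarhat, div_sub_div_same, hsplit]; ring
  -- Cauchy–Schwarz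
  have hCS : |S| ≤ Real.sqrt D * Real.sqrt (∑ i, d i ^ 2) := by
    have h1 : S ^ 2 ≤ (∑ i, (Real.sign (y i) * b i) ^ 2) * ∑ i, d i ^ 2 := by
      rw [hS]
      exact Finset.sum_mul_sq_le_sq_mul_sq _ _ _
    have h2 : (∑ i, (Real.sign (y i) * b i) ^ 2) ≤ D := by
      apply Finset.sum_le_sum
      intro i _
      have hs : Real.sign (y i) ^ 2 ≤ 1 := by
        rcases Real.sign_apply_eq (y i) with h' | h' | h' <;> rw [h'] <;> norm_num
      nlinarith [sq_nonneg (b i), hb1 i]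
    have h3 : S ^ 2 ≤ D * ∑ i, d i ^ 2 := by
      refine h1.trans (mul_le_mul_of_nonneg_right h2 ?_)
      exact Finset.sum_nonneg fun i _ => sq_nonneg _
    calc |S| = Real.sqrt (S ^ 2) := (Real.sqrt_sq_eq_abs S).symm
      _ ≤ Real.sqrt (D * ∑ i, d i ^ 2) := Real.sqrt_le_sqrt h3
      _ = Real.sqrt D * Real.sqrt (∑ i, d i ^ 2) := Real.sqrt_mul hDpos.le _
  -- decomposition of d
  set f : Fin m → ℝ := fun i => σ * (if (i : ℕ) < h then w i else 0) with hf
  have hdecomp : d = (Pmat - Phat) *ᵥ y - f := by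
    funext i
    have hPy : (Pmat *ᵥ y) i = if (i : ℕ) < h then y i else 0 := by
      rw [hP, Matrix.mulVec_diagonal]
      by_cases hih : (i : ℕ) < h <;> simp [hih]
    have : ((Pmat - Phat) *ᵥ y) i = (Pmat *ᵥ y) i - (Phat *ᵥ y) i := by
      rw [Matrix.sub_mulVec]; rfl
    rw [Pi.sub_apply, this, hPy, hf, hd, hxhat]
    by_cases hih : (i : ℕ) < h
    · simp only [hih, if_true]
      have := hy i; nlinarith [this]
    · simp only [hih, if_false]
      have := hx0 i (le_of_not_gt hih)
      simp [this]
  -- Euclidean norms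
  have hnorm_eq : ∀ v : Fin m → ℝ,
      ‖(WithLp.equiv 2 (Fin m → ℝ)).symm v‖ = Real.sqrt (∑ i, v i ^ 2) := by
    intro v
    rw [EuclideanSpace.norm_eq]
    congr 1
    exact Finset.sum_congr rfl fun i _ => by simp [sq_abs]
  have hE : ‖(WithLp.equiv 2 (Fin m → ℝ)).symm ((Pmat - Phat) *ᵥ y)‖ ≤
      N * Real.sqrt (∑ i, (y i) ^ 2) := by
    have h1 : (WithLp.equiv 2 (Fin m → ℝ)).symm ((Pmat - Phat) *ᵥ y) =
        (Matrix.toEuclideanLin (Pmat - Phat)).toContinuousLinearMap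
          ((WithLp.equiv 2 (Fin m → ℝ)).symm y) := by
      rw [LinearMap.coe_toContinuousLinearMap', Matrix.toEuclideanLin_apply]
      rfl
    rw [h1]
    calc _ ≤ N * ‖(WithLp.equiv 2 (Fin m → ℝ)).symm y‖ :=
          (Matrix.toEuclideanLin (Pmat - Phat)).toContinuousLinearMap.le_opNorm _
      _ = N * Real.sqrt (∑ i, (y i) ^ 2) := by rw [hnorm_eq]
  have hsum_ind : ∑ i : Fin m, (if (i : ℕ) < h then (1 : ℝ) else 0) = h := by
    rw [Fin.sum_univ_eq_sum_range (fun i => if i < h then (1 : ℝ) else 0) m]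
    rw [← Finset.sum_subset (Finset.range_subset_range.2 hhm.le)
      (fun i _ hi => by
        simp only [Finset.mem_range, not_lt] at hi
        exact if_neg (Nat.not_lt.mpr hi))]
    rw [Finset.sum_congr rfl fun i hi => if_pos (Finset.mem_range.mp hi)]
    simp
  have hF : ‖(WithLp.equiv 2 (Fin m → ℝ)).symm f‖ = σ * Real.sqrt h := by
    rw [hnorm_eq]
    have h1 : ∑ i, f i ^ 2 = σ ^ 2 * h := by
      rw [hf, ← hsum_ind, Finset.mul_sum]
      refine Finset.sum_congr rfl fun i _ => ?_
      by_cases hih : (i : ℕ) < h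
      · simp only [hih, if_true]
        rcases hw i with h' | h' <;> rw [h'] <;> ring
      · simp [hih]
    rw [h1, Real.sqrt_mul (sq_nonneg σ), Real.sqrt_sq hσ.le]
  have hdnorm : Real.sqrt (∑ i, d i ^ 2) ≤ C := by
    have h1 : (WithLp.equiv 2 (Fin m → ℝ)).symm d =
        (WithLp.equiv 2 (Fin m → ℝ)).symm ((Pmat - Phat) *ᵥ y) -
        (WithLp.equiv 2 (Fin m → ℝ)).symm f := by
      rw [hdecomp]; rfl
    calc Real.sqrt (∑ i, d i ^ 2) = ‖(WithLp.equiv 2 (Fin m → ℝ)).symm d‖ :=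
          (hnorm_eq d).symm
      _ ≤ ‖(WithLp.equiv 2 (Fin m → ℝ)).symm ((Pmat - Phat) *ᵥ y)‖ +
          ‖(WithLp.equiv 2 (Fin m → ℝ)).symm f‖ := by rw [h1]; exact norm_sub_le _ _
      _ ≤ C := by rw [hC, hF]; exact add_le_add_left hE _
  -- first inequality
  have hsqrtD : Real.sqrt D * Real.sqrt D = D := Real.mul_self_sqrt hDpos.le
  have hsqrtDpos : 0 < Real.sqrt D := Real.sqrt_pos.mpr hDpos
  have first : |tstar - tstarhat| ≤ 2 * C / Real.sqrt D := by
    rw [hdiff, abs_div, abs_of_pos hDpos, abs_mul]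
    rw [show |(2 : ℝ)| = 2 by norm_num]
    have h1 : |S| ≤ Real.sqrt D * C :=
      hCS.trans (mul_le_mul_of_nonneg_left hdnorm (Real.sqrt_nonneg D))
    have h2 : 2 * |S| / D ≤ 2 * (Real.sqrt D * C) / D := by
      gcongr
    refine h2.trans_eq ?_
    have key : ∀ c s dd : ℝ, s * s = dd → 0 < s → 2 * (s * c) / dd = 2 * c / s := by
      intro c s dd hsd hs
      rw [← hsd, show 2 * (s * c) = 2 * c * s from by ring]
      exact mul_div_mul_right _ _ hs.ne'
    exact key C _ D hsqrtD hsqrtDpos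
  refine ⟨first, ?_⟩
  -- second inequality
  have hsqrtm : Real.sqrt m ≤ Real.sqrt D := Real.sqrt_le_sqrt hmD
  have hsqrtmpos : 0 < Real.sqrt m := Real.sqrt_pos.mpr hmpos
  have h2 : 2 * C / Real.sqrt D ≤ 2 * C / Real.sqrt m := by
    gcongr
  refine h2.trans_eq ?_
  rw [hC, Real.sqrt_div (Nat.cast_nonneg h)]
  ring
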